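/- For every α > 0 and every integer j ≥ 1, 𝒜_α^{2j} = (−1)^{j−1} (2α)^{2j−1} · 𝒜_α 𝒥_α and 𝒜_α^{2j−1} = (−1)^{j−1} (2α)^{2j−2} · 𝒜_α. -/
import Mathlib


open Matrix

/-- The 2×2 rotation generator `A = [[0, -1], [1, 0]]`. -/
noncomputable def Amat : Matrix (Fin 2) (Fin 2) ℝ := !![0, -1; 1, 0]

/-- The 4×4 matrix `𝒜_α = [[αA, I₂], [-α²I₂, αA]]` in 2×2 block form. -/
noncomputable def Acal (α : ℝ) : Matrix (Fin 2 ⊕ Fin 2) (Fin 2 ⊕ Fin 2) ℝ :=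
  Matrix.fromBlocks (α • Amat) 1 (-(α ^ 2) • 1) (α • Amat)

/-- The 4×4 matrix `𝒥_α = [[0₂, (1/α)I₂], [-αI₂, 0₂]]` in 2×2 block form. -/
noncomputable def Jcal (α : ℝ) : Matrix (Fin 2 ⊕ Fin 2) (Fin 2 ⊕ Fin 2) ℝ :=
  Matrix.fromBlocks 0 (α⁻¹ • 1) ((-α) • 1) 0

lemma Acal_sq (α : ℝ) (hα : α ≠ 0) : Acal α ^ 2 = (2*α) • (Acal α * Jcal α) := by
  ext i k
  rcases i with i | i <;> rcases k with k | k <;> fin_cases i <;> fin_cases k <;>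
    simp [Acal, Amat, Jcal, pow_two, Matrix.mul_apply, Fintype.sum_sum_type,
      Fin.sum_univ_succ, Matrix.one_apply] <;> (try field_simp) <;> (try ring)

lemma Acal_cube (α : ℝ) : Acal α ^ 3 = (-(4*α^2)) • Acal α := by
  ext i k
  rcases i with i | i <;> rcases k with k | k <;> fin_cases i <;> fin_cases k <;>
    simp [Acal, Amat, pow_succ, pow_two, Matrix.mul_apply, Fintype.sum_sum_type,
      Fin.sum_univ_succ, Matrix.one_apply] <;> ring



/-- For every `α > 0` and every integer `j ≥ 1`,
`𝒜_α^{2j} = (-1)^{j-1} (2α)^{2j-1} 𝒜_α 𝒥_α` and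
`𝒜_α^{2j-1} = (-1)^{j-1} (2α)^{2j-2} 𝒜_α`. -/
theorem stmt17 (α : ℝ) (hα : 0 < α) (j : ℕ) (hj : 1 ≤ j) :
    Acal α ^ (2 * j) = ((-1 : ℝ) ^ (j - 1) * (2 * α) ^ (2 * j - 1)) • (Acal α * Jcal α) ∧
    Acal α ^ (2 * j - 1) = ((-1 : ℝ) ^ (j - 1) * (2 * α) ^ (2 * j - 2)) • Acal α := by
  induction j with
  | zero => omega
  | succ n ih =>
    rcases Nat.lt_or_ge n 1 with h1 | hn
    · have hn : n = 0 := by omega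
      subst hn
      refine ⟨?_, by simp⟩
      rw [show 2 * 1 = 2 from rfl, Acal_sq α hα.ne']
      norm_num
    · obtain ⟨m, rfl⟩ : ∃ m, n = m + 1 := ⟨n - 1, by omega⟩
      obtain ⟨he, ho⟩ := ih (by omega)
      have ho' : Acal α ^ (2 * m + 1) = ((-1 : ℝ) ^ m * (2 * α) ^ (2 * m)) • Acal α := by
        rw [show 2 * m + 1 = 2 * (m+1) - 1 from by omega, ho,
          show m + 1 - 1 = m from rfl, show 2 * (m+1) - 2 = 2 * m from by omega]
      have hodd : Acal α ^ (2 * m + 3) = ((-1 : ℝ) ^ (m+1) * (2*α) ^ (2*m + 2)) • Acal α := by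
        rw [show 2 * m + 3 = (2 * m + 1) + 2 from by omega, pow_add, ho',
          Matrix.smul_mul, show Acal α * Acal α ^ 2 = Acal α ^ 3 from (pow_succ' _ _).symm,
          Acal_cube, smul_smul]
        congr 1
        rw [pow_succ, pow_succ, pow_succ]
        ring
      constructor
      · rw [show 2 * (m + 1 + 1) = (2 * m + 3) + 1 from by omega, pow_succ, hodd,
          Matrix.smul_mul, show Acal α * Acal α = Acal α ^ 2 from (sq _).symm,
          Acal_sq α hα.ne', smul_smul, show m + 1 + 1 - 1 = m + 1 from rfl]
        congr 1
        rw [show 2*m+3+1-1 = (2*m+2)+1 from rfl, pow_succ]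
        ring
      · rw [show 2 * (m + 1 + 1) - 1 = 2 * m + 3 from by omega, hodd,
          show m + 1 + 1 - 1 = m + 1 from rfl,
          show 2 * (m + 1 + 1) - 2 = 2 * m + 2 from by omega]
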